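/- For a prime p and γ ≥ 1, the number of subrings of the ring ℤ_{p^{2γ−1}} × ℤ_{p^{2γ−1}} equals 5·∑_{j=1}^{γ} (2j−1)·p^{γ−j}. -/

import Mathlib

namespace CountSubrings

open Finset

def cond (p k a b c : ℕ) : Prop :=
  p ^ b ∣ c * p ^ (k - a) ∧ (p : ℤ) ^ b ∣ (c : ℤ) * ((c : ℤ) - (p : ℤ) ^ a)

instance (p k a b c : ℕ) : Decidable (cond p k a b c) := by
  unfold cond; infer_instance

def f (p k a b : ℕ) : ℕ := ((Finset.range (p ^ b)).filter (cond p k a b)).card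

def sg (q A B C : ℕ) : AddSubgroup (ZMod q × ZMod q) where
  carrier := {x | ∃ s t : ZMod q, x.1 = s * A ∧ x.2 = s * C + t * B}
  zero_mem' := ⟨0, 0, by simp⟩
  add_mem' := by
    rintro ⟨x1, x2⟩ ⟨y1, y2⟩ ⟨s, t, hs, ht⟩ ⟨s', t', hs', ht'⟩
    exact ⟨s + s', t + t', by simp_all; ring, by simp_all; ring⟩
  neg_mem' := by
    rintro ⟨x1, x2⟩ ⟨s, t, hs, ht⟩
    exact ⟨-s, -t, by simp_all [neg_mul], by simp_all; ring⟩

lemma mem_sg {q A B C : ℕ} {x : ZMod q × ZMod q} :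
    x ∈ sg q A B C ↔ ∃ s t : ZMod q, x.1 = s * A ∧ x.2 = s * C + t * B := Iff.rfl

section Helpers

variable {p k : ℕ}

/-- Casting `s.val * A` back. -/
lemma smul_decomp [NeZero (p ^ k)] (s : ZMod (p ^ k)) (A : ℕ) :
    s * (A : ZMod (p ^ k)) = ((s.val * A : ℕ) : ZMod (p ^ k)) := by
  push_cast [ZMod.natCast_val, ZMod.cast_id]
  ring

lemma dvd_val_natCast {A N q : ℕ} (hAq : A ∣ q) (hAN : A ∣ N) :
    A ∣ ((N : ZMod q)).val := by
  rw [ZMod.val_natCast]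
  exact (Nat.dvd_mod_iff hAq).mpr hAN

/-- `p^b` divides a value, descend the divisibility to `ℕ`. -/
lemma nat_dvd_of_dvd_val {b N : ℕ} (hb : b ≤ k)
    (h : p ^ b ∣ ((N : ZMod (p ^ k))).val) : p ^ b ∣ N := by
  rw [ZMod.val_natCast] at h
  exact (Nat.dvd_mod_iff (pow_dvd_pow p hb)).mp h

/-- Version for integers. -/
lemma int_dvd_of_dvd_val [NeZero (p ^ k)] {b : ℕ} (hb : b ≤ k) {z : ℤ}
    (h : p ^ b ∣ ((z : ZMod (p ^ k))).val) : (p : ℤ) ^ b ∣ z := by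
  have hdvd : p ^ b ∣ p ^ k := pow_dvd_pow p hb
  set φ := ZMod.castHom hdvd (ZMod (p ^ b)) with hφ
  have h1 : φ (z : ZMod (p ^ k)) = (z : ZMod (p ^ b)) := map_intCast φ z
  have h2 : φ (z : ZMod (p ^ k)) = 0 := by
    have hx : (z : ZMod (p ^ k)) = (((z : ZMod (p ^ k)).val : ℕ) : ZMod (p ^ k)) := by
      rw [ZMod.natCast_val, ZMod.cast_id]
    rw [hx, map_natCast]
    exact (ZMod.natCast_eq_zero_iff _ _).mpr h
  rw [h1] at h2
  have := (ZMod.intCast_zmod_eq_zero_iff_dvd z (p ^ b)).mp h2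
  exact_mod_cast this

/-- If `p^b` divides the value of `x : ZMod (p^k)` and `c, c' < p^b` with
`↑c - ↑c' = x` then `c = c'`. -/
lemma eq_of_dvd_val_sub [NeZero (p ^ k)] {b c c' : ℕ} (hb : b ≤ k)
    (hc : c < p ^ b) (hc' : c' < p ^ b)
    (h : p ^ b ∣ (((c : ZMod (p ^ k)) - (c' : ZMod (p ^ k)))).val) : c = c' := by
  have hdvd : p ^ b ∣ p ^ k := pow_dvd_pow p hb
  set φ := ZMod.castHom hdvd (ZMod (p ^ b)) with hφ
  set x := (c : ZMod (p ^ k)) - (c' : ZMod (p ^ k)) with hxdef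
  have h0 : φ x = 0 := by
    have hx : x = ((x.val : ℕ) : ZMod (p ^ k)) := by
      rw [ZMod.natCast_val, ZMod.cast_id]
    rw [hx, map_natCast]
    exact (ZMod.natCast_eq_zero_iff _ _).mpr h
  rw [hxdef, map_sub, map_natCast, map_natCast] at h0
  have hcc : ((c : ZMod (p ^ b))) = ((c' : ZMod (p ^ b))) := by linear_combination h0
  have := congrArg ZMod.val hcc
  rwa [ZMod.val_cast_of_lt hc, ZMod.val_cast_of_lt hc'] at this

/-- From `u * p^a = 0` in `ZMod (p^k)` conclude `p^(k-a) ∣ u.val`. -/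
lemma dvd_val_of_mul_pow_eq_zero (hp : p.Prime) [NeZero (p ^ k)] {a : ℕ} (ha : a ≤ k)
    {u : ZMod (p ^ k)} (h : u * ((p ^ a : ℕ) : ZMod (p ^ k)) = 0) :
    p ^ (k - a) ∣ u.val := by
  rw [smul_decomp] at h
  have hdvd : p ^ k ∣ u.val * p ^ a := (ZMod.natCast_eq_zero_iff _ _).mp h
  have hsplit : p ^ k = p ^ (k - a) * p ^ a := by
    rw [← pow_add]; congr 1; omega
  have hdvd2 : p ^ (k - a) * p ^ a ∣ u.val * p ^ a := hsplit ▸ hdvd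
  exact (Nat.mul_dvd_mul_iff_right (pow_pos hp.pos a)).mp hdvd2

/-- If `p^(k-a) ∣ u.val` and `cond1` holds then `p^b ∣ (u * c).val`. -/
lemma dvd_val_mul_c (hp : p.Prime) [NeZero (p ^ k)] {a b c : ℕ} (hb : b ≤ k)
    (h1 : p ^ b ∣ c * p ^ (k - a)) {u : ZMod (p ^ k)} (hu : p ^ (k - a) ∣ u.val) :
    p ^ b ∣ (u * (c : ZMod (p ^ k))).val := by
  rw [smul_decomp]
  apply dvd_val_natCast (pow_dvd_pow p hb)
  obtain ⟨m, hm⟩ := hu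
  rw [hm]
  have : p ^ (k - a) * m * c = m * (c * p ^ (k - a)) := by ring
  rw [this]
  exact Dvd.dvd.mul_left h1 m

end Helpers


section SG

variable {p k : ℕ}

lemma sg_gen1_mem (q A B C : ℕ) : ((A : ZMod q), (C : ZMod q)) ∈ sg q A B C :=
  ⟨1, 0, by simp, by simp⟩

lemma sg_gen2_mem (q A B C : ℕ) : ((0 : ZMod q), (B : ZMod q)) ∈ sg q A B C :=
  ⟨0, 1, by simp, by simp⟩

/-- First coordinates of members of `sg` have value divisible by `p^a`. -/
lemma sg_fst_dvd [NeZero (p ^ k)] {a : ℕ} (ha : a ≤ k) {B C : ℕ}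
    {x : ZMod (p ^ k) × ZMod (p ^ k)} (hx : x ∈ sg (p ^ k) (p ^ a) B C) :
    p ^ a ∣ x.1.val := by
  obtain ⟨s, t, hs, -⟩ := hx
  rw [hs, smul_decomp]
  exact dvd_val_natCast (pow_dvd_pow p ha) (Dvd.dvd.mul_left dvd_rfl s.val)

/-- Members of `sg` with zero first coordinate have second value divisible by `p^b`. -/
lemma sg_snd_dvd (hp : p.Prime) [NeZero (p ^ k)] {a b c : ℕ} (ha : a ≤ k) (hb : b ≤ k)
    (h1 : p ^ b ∣ c * p ^ (k - a))
    {x : ZMod (p ^ k) × ZMod (p ^ k)} (hx : x ∈ sg (p ^ k) (p ^ a) (p ^ b) c)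
    (hx1 : x.1 = 0) : p ^ b ∣ x.2.val := by
  obtain ⟨s, t, hs, ht⟩ := hx
  rw [hs] at hx1
  have hsv : p ^ (k - a) ∣ s.val := dvd_val_of_mul_pow_eq_zero hp ha hx1
  have hsc : p ^ b ∣ (s * (c : ZMod (p ^ k))).val := dvd_val_mul_c hp hb h1 hsv
  have htb : p ^ b ∣ (t * ((p ^ b : ℕ) : ZMod (p ^ k))).val := by
    rw [smul_decomp]
    exact dvd_val_natCast (pow_dvd_pow p hb) (Dvd.dvd.mul_left dvd_rfl t.val)
  rw [ht]
  obtain ⟨m, hm⟩ := hsc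
  obtain ⟨n, hn⟩ := htb
  have e1 : s * (c : ZMod (p ^ k)) = ((p ^ b * m : ℕ) : ZMod (p ^ k)) := by
    rw [← hm, ZMod.natCast_val, ZMod.cast_id]
  have e2 : t * ((p ^ b : ℕ) : ZMod (p ^ k)) = ((p ^ b * n : ℕ) : ZMod (p ^ k)) := by
    rw [← hn, ZMod.natCast_val, ZMod.cast_id]
  rw [e1, e2, ← Nat.cast_add]
  exact dvd_val_natCast (pow_dvd_pow p hb) ⟨m + n, by ring⟩

/-- `sg` is closed under multiplication when `cond2` holds. -/
lemma sg_mul_closed [NeZero (p ^ k)] {a b c : ℕ}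
    (h2 : (p : ℤ) ^ b ∣ (c : ℤ) * ((c : ℤ) - (p : ℤ) ^ a))
    {x y : ZMod (p ^ k) × ZMod (p ^ k)}
    (hx : x ∈ sg (p ^ k) (p ^ a) (p ^ b) c) (hy : y ∈ sg (p ^ k) (p ^ a) (p ^ b) c) :
    x * y ∈ sg (p ^ k) (p ^ a) (p ^ b) c := by
  obtain ⟨d, hd⟩ := h2
  obtain ⟨s, t, hs, ht⟩ := hx
  obtain ⟨s', t', hs', ht'⟩ := hy
  set A : ZMod (p ^ k) := ((p ^ a : ℕ) : ZMod (p ^ k))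
  set B : ZMod (p ^ k) := ((p ^ b : ℕ) : ZMod (p ^ k))
  set C : ZMod (p ^ k) := ((c : ℕ) : ZMod (p ^ k))
  set D : ZMod (p ^ k) := ((d : ℤ) : ZMod (p ^ k))
  have key : C * C = A * C + B * D := by
    have hcast := congrArg (fun z : ℤ => (z : ZMod (p ^ k))) hd
    push_cast at hcast
    simp only [A, B, C, D]
    push_cast
    linear_combination hcast
  refine ⟨s * s' * A, s * s' * D + (s * t' + s' * t) * C + t * t' * B, ?_, ?_⟩
  · show x.1 * y.1 = _
    rw [hs, hs']
    ring
  · show x.2 * y.2 = _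
    rw [ht, ht']
    have expand : (s * C + t * B) * (s' * C + t' * B)
        = (s * s') * (C * C) + (s * t' + s' * t) * C * B + t * t' * B * B := by ring
    rw [expand, key]
    ring


/-- Injectivity of the parametrization. -/
lemma sg_inj (hp : p.Prime) [NeZero (p ^ k)] {a b c a' b' c' : ℕ}
    (ha : a ≤ k) (hb : b ≤ k) (hc : c < p ^ b) (h1 : p ^ b ∣ c * p ^ (k - a))
    (ha' : a' ≤ k) (hb' : b' ≤ k) (hc' : c' < p ^ b') (h1' : p ^ b' ∣ c' * p ^ (k - a'))
    (heq : sg (p ^ k) (p ^ a) (p ^ b) c = sg (p ^ k) (p ^ a') (p ^ b') c') :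
    a = a' ∧ b = b' ∧ c = c' := by
  have hval : ∀ {e e' : ℕ}, e ≤ k → e' < k →
      p ^ e ∣ (((p ^ e' : ℕ) : ZMod (p ^ k))).val → e ≤ e' := by
    intro e e' he he' hdvd
    rw [ZMod.val_natCast, Nat.mod_eq_of_lt (Nat.pow_lt_pow_right hp.one_lt he')] at hdvd
    exact (Nat.pow_dvd_pow_iff_le_right hp.one_lt).mp hdvd
  have haa : a = a' := by
    have m2 := sg_gen1_mem (p ^ k) (p ^ a') (p ^ b') c'
    rw [← heq] at m2
    have d1 : p ^ a ∣ (((p ^ a' : ℕ) : ZMod (p ^ k))).val := sg_fst_dvd ha m2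
    have m2' := sg_gen1_mem (p ^ k) (p ^ a) (p ^ b) c
    rw [heq] at m2'
    have d2 : p ^ a' ∣ (((p ^ a : ℕ) : ZMod (p ^ k))).val := sg_fst_dvd ha' m2'
    have le1 : a ≤ a' := by
      rcases eq_or_lt_of_le ha' with hk' | hk'
      · omega
      · exact hval ha hk' d1
    have le2 : a' ≤ a := by
      rcases eq_or_lt_of_le ha with hk' | hk'
      · omega
      · exact hval ha' hk' d2
    omega
  have hbb : b = b' := by
    have m4 := sg_gen2_mem (p ^ k) (p ^ a') (p ^ b') c'
    rw [← heq] at m4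
    have d1 : p ^ b ∣ (((p ^ b' : ℕ) : ZMod (p ^ k))).val :=
      sg_snd_dvd hp ha hb h1 m4 rfl
    have m4' := sg_gen2_mem (p ^ k) (p ^ a) (p ^ b) c
    rw [heq] at m4'
    have d2 : p ^ b' ∣ (((p ^ b : ℕ) : ZMod (p ^ k))).val :=
      sg_snd_dvd hp ha' hb' h1' m4' rfl
    have le1 : b ≤ b' := by
      rcases eq_or_lt_of_le hb' with hk' | hk'
      · omega
      · exact hval hb hk' d1
    have le2 : b' ≤ b := by
      rcases eq_or_lt_of_le hb with hk' | hk'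
      · omega
      · exact hval hb' hk' d2
    omega
  subst haa
  subst hbb
  refine ⟨rfl, rfl, ?_⟩
  have m2 := sg_gen1_mem (p ^ k) (p ^ a) (p ^ b) c
  rw [heq] at m2
  obtain ⟨s, t, hs, ht⟩ := m2
  simp only at hs ht
  have hs0 : (s - 1) * ((p ^ a : ℕ) : ZMod (p ^ k)) = 0 := by
    rw [sub_mul, one_mul, ← hs, sub_self]
  have hx : ((0 : ZMod (p ^ k)), (c : ZMod (p ^ k)) - (c' : ZMod (p ^ k)))
      ∈ sg (p ^ k) (p ^ a) (p ^ b) c' := by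
    refine ⟨s - 1, t, hs0.symm, ?_⟩
    show (c : ZMod (p ^ k)) - (c' : ZMod (p ^ k)) = _
    linear_combination ht
  have hdv : p ^ b ∣ (((c : ZMod (p ^ k)) - (c' : ZMod (p ^ k)))).val :=
    sg_snd_dvd hp ha hb h1' hx rfl
  exact eq_of_dvd_val_sub hb hc hc' hdv

/-- Every additive subgroup of `ZMod (p^k)` is a "valuation" subgroup. -/
lemma addSubgroup_classify (hp : p.Prime) [NeZero (p ^ k)]
    (H : AddSubgroup (ZMod (p ^ k))) :
    ∃ a, a ≤ k ∧ ∀ x : ZMod (p ^ k), x ∈ H ↔ p ^ a ∣ x.val := by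
  classical
  set P : ℕ → Prop := fun d => ∀ x ∈ H, p ^ d ∣ x.val with hPdef
  have hP0 : P 0 := by intro x _; simp
  set a := Nat.findGreatest P k with hadef
  have hak : a ≤ k := Nat.findGreatest_le k
  have hPa : P a := Nat.findGreatest_spec (Nat.zero_le k) hP0
  refine ⟨a, hak, fun x => ⟨fun hx => hPa x hx, fun hdvd => ?_⟩⟩
  have hgen : ((p ^ a : ℕ) : ZMod (p ^ k)) ∈ H := by
    rcases eq_or_lt_of_le hak with heq | hlt
    · rw [heq]
      simpa using H.zero_mem
    · have hnot : ¬ P (a + 1) := Nat.findGreatest_is_greatest (Nat.lt_succ_self _) (by omega)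
      have hnot' : ∃ x ∈ H, ¬ p ^ (a + 1) ∣ x.val := by
        by_contra hcon
        push_neg at hcon
        exact hnot (fun x hx => hcon x hx)
      obtain ⟨x₀, hx₀H, hx₀⟩ := hnot'
      have hxa : p ^ a ∣ x₀.val := hPa x₀ hx₀H
      obtain ⟨w, hw⟩ := hxa
      have hpw : ¬ p ∣ w := by
        rintro ⟨w', hw'⟩
        exact hx₀ ⟨w', by rw [hw, hw']; ring⟩
      have hcop : w.Coprime (p ^ k) :=
        Nat.Coprime.pow_right k ((Nat.coprime_comm).mp (hp.coprime_iff_not_dvd.mpr hpw))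
      set u := ZMod.unitOfCoprime w hcop with hu
      have hx₀eq : x₀ = ((p ^ a : ℕ) : ZMod (p ^ k)) * (u : ZMod (p ^ k)) := by
        have hxv : x₀ = ((x₀.val : ℕ) : ZMod (p ^ k)) := by
          rw [ZMod.natCast_val, ZMod.cast_id]
        rw [hxv, hw, ZMod.coe_unitOfCoprime]
        push_cast
        ring
      have key : ((p ^ a : ℕ) : ZMod (p ^ k))
          = ((u⁻¹ : (ZMod (p ^ k))ˣ) : ZMod (p ^ k)).val • x₀ := by
        rw [nsmul_eq_mul, ZMod.natCast_val, ZMod.cast_id, hx₀eq]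
        symm
        have huv : (u : ZMod (p ^ k)) * ((u⁻¹ : (ZMod (p ^ k))ˣ) : ZMod (p ^ k)) = 1 :=
          u.mul_inv
        calc ((u⁻¹ : (ZMod (p ^ k))ˣ) : ZMod (p ^ k))
            * (((p ^ a : ℕ) : ZMod (p ^ k)) * (u : ZMod (p ^ k)))
            = ((p ^ a : ℕ) : ZMod (p ^ k))
              * ((u : ZMod (p ^ k)) * ((u⁻¹ : (ZMod (p ^ k))ˣ) : ZMod (p ^ k))) := by ring
        _ = ((p ^ a : ℕ) : ZMod (p ^ k)) := by rw [huv, mul_one]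
      rw [key]
      exact AddSubgroup.nsmul_mem H hx₀H _
  obtain ⟨m, hm⟩ := hdvd
  have hx : x = m • ((p ^ a : ℕ) : ZMod (p ^ k)) := by
    rw [nsmul_eq_mul]
    have hxv : x = ((x.val : ℕ) : ZMod (p ^ k)) := by
      rw [ZMod.natCast_val, ZMod.cast_id]
    rw [hxv, hm]
    push_cast
    ring
  rw [hx]
  exact AddSubgroup.nsmul_mem H hgen m


lemma zmod_self_decomp [NeZero (p ^ k)] (x : ZMod (p ^ k)) :
    x = ((x.val : ℕ) : ZMod (p ^ k)) := by
  rw [ZMod.natCast_val, ZMod.cast_id]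

/-- Surjectivity of the parametrization. -/
lemma sg_surj (hp : p.Prime) [NeZero (p ^ k)]
    (S : AddSubgroup (ZMod (p ^ k) × ZMod (p ^ k)))
    (hS : ∀ x ∈ S, ∀ y ∈ S, x * y ∈ S) :
    ∃ a b c, a ≤ k ∧ b ≤ k ∧ c < p ^ b ∧ cond p k a b c ∧
      sg (p ^ k) (p ^ a) (p ^ b) c = S := by
  set H1 := S.map (AddMonoidHom.fst (ZMod (p ^ k)) (ZMod (p ^ k))) with hH1def
  obtain ⟨a, hak, hH1⟩ := addSubgroup_classify hp H1
  set H2 : AddSubgroup (ZMod (p ^ k)) :=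
    { carrier := {y | ((0 : ZMod (p ^ k)), y) ∈ S}
      zero_mem' := by exact S.zero_mem
      add_mem' := by
        intro y1 y2 h1 h2
        have := S.add_mem h1 h2
        simpa using this
      neg_mem' := by
        intro y h
        have := S.neg_mem h
        simpa using this } with hH2def
  have hH2mem : ∀ y : ZMod (p ^ k), y ∈ H2 ↔ ((0 : ZMod (p ^ k)), y) ∈ S :=
    fun y => Iff.rfl
  obtain ⟨b, hbk, hH2⟩ := addSubgroup_classify hp H2
  have hpa1 : ((p ^ a : ℕ) : ZMod (p ^ k)) ∈ H1 :=
    (hH1 _).mpr (dvd_val_natCast (pow_dvd_pow p hak) dvd_rfl)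
  rw [hH1def, AddSubgroup.mem_map] at hpa1
  obtain ⟨z, hzS, hz1⟩ := hpa1
  simp only [AddMonoidHom.coe_fst] at hz1
  have hzmem : (((p ^ a : ℕ) : ZMod (p ^ k)), z.2) ∈ S := by
    have hz : z = (((p ^ a : ℕ) : ZMod (p ^ k)), z.2) :=
      Prod.ext_iff.mpr ⟨hz1, rfl⟩
    rwa [hz] at hzS
  set c := z.2.val % p ^ b with hcdef
  have hc : c < p ^ b := Nat.mod_lt _ (pow_pos hp.pos b)
  set m := z.2.val / p ^ b with hmdef
  have hsplit : z.2.val = p ^ b * m + c := (Nat.div_add_mod z.2.val (p ^ b)).symm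
  have hbmS : ((0 : ZMod (p ^ k)), ((p ^ b * m : ℕ) : ZMod (p ^ k))) ∈ S :=
    (hH2mem _).mp ((hH2 _).mpr (dvd_val_natCast (pow_dvd_pow p hbk) ⟨m, rfl⟩))
  have hmem : (((p ^ a : ℕ) : ZMod (p ^ k)), (c : ZMod (p ^ k))) ∈ S := by
    have h := S.sub_mem hzmem hbmS
    have hz2 : z.2 = ((p ^ b * m : ℕ) : ZMod (p ^ k)) + (c : ZMod (p ^ k)) := by
      rw [zmod_self_decomp z.2]
      conv_lhs => rw [hsplit]
      push_cast
      ring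
    have he : (((p ^ a : ℕ) : ZMod (p ^ k)), z.2)
        - ((0 : ZMod (p ^ k)), ((p ^ b * m : ℕ) : ZMod (p ^ k)))
        = (((p ^ a : ℕ) : ZMod (p ^ k)), (c : ZMod (p ^ k))) := by
      apply Prod.ext_iff.mpr
      constructor
      · show ((p ^ a : ℕ) : ZMod (p ^ k)) - 0 = _
        rw [sub_zero]
      · show z.2 - ((p ^ b * m : ℕ) : ZMod (p ^ k)) = (c : ZMod (p ^ k))
        rw [hz2]
        ring
    rwa [he] at h
  have hb0S : ((0 : ZMod (p ^ k)), ((p ^ b : ℕ) : ZMod (p ^ k))) ∈ S :=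
    (hH2mem _).mp ((hH2 _).mpr (dvd_val_natCast (pow_dvd_pow p hbk) dvd_rfl))
  have hcond1 : p ^ b ∣ c * p ^ (k - a) := by
    have hsm := AddSubgroup.nsmul_mem S hmem (p ^ (k - a))
    have he : (p ^ (k - a)) • ((((p ^ a : ℕ) : ZMod (p ^ k))), (c : ZMod (p ^ k)))
        = ((0 : ZMod (p ^ k)), ((c * p ^ (k - a) : ℕ) : ZMod (p ^ k))) := by
      rw [Prod.smul_mk]
      apply Prod.ext_iff.mpr
      constructor
      · show (p ^ (k - a)) • ((p ^ a : ℕ) : ZMod (p ^ k)) = 0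
        rw [nsmul_eq_mul]
        push_cast
        rw [← pow_add]
        have : k - a + a = k := by omega
        rw [this]
        exact_mod_cast ZMod.natCast_self (p ^ k)
      · show (p ^ (k - a)) • ((c : ℕ) : ZMod (p ^ k)) = _
        rw [nsmul_eq_mul]
        push_cast
        ring
    rw [he] at hsm
    exact nat_dvd_of_dvd_val hbk ((hH2 _).mp ((hH2mem _).mpr hsm))
  have hcond2 : (p : ℤ) ^ b ∣ (c : ℤ) * ((c : ℤ) - (p : ℤ) ^ a) := by
    have hmul := hS _ hmem _ hmem
    have hsub := S.sub_mem hmul (AddSubgroup.nsmul_mem S hmem (p ^ a))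
    have he : ((((p ^ a : ℕ) : ZMod (p ^ k))), (c : ZMod (p ^ k)))
          * ((((p ^ a : ℕ) : ZMod (p ^ k))), (c : ZMod (p ^ k)))
          - (p ^ a) • ((((p ^ a : ℕ) : ZMod (p ^ k))), (c : ZMod (p ^ k)))
        = ((0 : ZMod (p ^ k)),
            (((c : ℤ) * ((c : ℤ) - (p : ℤ) ^ a) : ℤ) : ZMod (p ^ k))) := by
      rw [Prod.mk_mul_mk, Prod.smul_mk, Prod.mk_sub_mk]
      apply Prod.ext_iff.mpr
      constructor
      · show _ - _ = (0 : ZMod (p ^ k))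
        rw [nsmul_eq_mul]
        push_cast
        ring
      · show _ - _ = _
        rw [nsmul_eq_mul]
        push_cast
        ring
    rw [he] at hsub
    exact int_dvd_of_dvd_val hbk ((hH2 _).mp ((hH2mem _).mpr hsub))
  refine ⟨a, b, c, hak, hbk, hc, ⟨hcond1, hcond2⟩, ?_⟩
  apply le_antisymm
  · rintro x ⟨s, t, hs, ht⟩
    have h1 := AddSubgroup.nsmul_mem S hmem s.val
    have h2 := AddSubgroup.nsmul_mem S hb0S t.val
    have hadd := S.add_mem h1 h2
    have he : s.val • ((((p ^ a : ℕ) : ZMod (p ^ k))), (c : ZMod (p ^ k)))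
        + t.val • ((0 : ZMod (p ^ k)), ((p ^ b : ℕ) : ZMod (p ^ k))) = x := by
      rw [Prod.smul_mk, Prod.smul_mk, Prod.mk_add_mk]
      apply Prod.ext_iff.mpr
      constructor
      · show s.val • ((p ^ a : ℕ) : ZMod (p ^ k)) + t.val • (0 : ZMod (p ^ k)) = x.1
        rw [hs, nsmul_eq_mul, smul_zero, add_zero, ZMod.natCast_val, ZMod.cast_id]
      · show s.val • ((c : ℕ) : ZMod (p ^ k)) + t.val • ((p ^ b : ℕ) : ZMod (p ^ k)) = x.2
        rw [ht, nsmul_eq_mul, nsmul_eq_mul, ZMod.natCast_val, ZMod.natCast_val,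
          ZMod.cast_id, ZMod.cast_id]
    rwa [he] at hadd
  · intro x hx
    have hx1 : x.1 ∈ H1 := by
      rw [hH1def, AddSubgroup.mem_map]
      exact ⟨x, hx, rfl⟩
    obtain ⟨m1, hm1⟩ := (hH1 _).mp hx1
    have hxs : x.1 = (m1 : ZMod (p ^ k)) * ((p ^ a : ℕ) : ZMod (p ^ k)) := by
      rw [zmod_self_decomp x.1, hm1]
      push_cast
      ring
    have hsub := S.sub_mem hx (AddSubgroup.nsmul_mem S hmem m1)
    have he : x - m1 • ((((p ^ a : ℕ) : ZMod (p ^ k))), (c : ZMod (p ^ k)))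
        = ((0 : ZMod (p ^ k)), x.2 - (m1 : ZMod (p ^ k)) * (c : ZMod (p ^ k))) := by
      have hxp : x = (x.1, x.2) := rfl
      rw [hxp, Prod.smul_mk, Prod.mk_sub_mk]
      apply Prod.ext_iff.mpr
      constructor
      · show x.1 - m1 • ((p ^ a : ℕ) : ZMod (p ^ k)) = 0
        rw [nsmul_eq_mul, hxs, sub_self]
      · show x.2 - m1 • ((c : ℕ) : ZMod (p ^ k)) = _
        rw [nsmul_eq_mul]
    rw [he] at hsub
    obtain ⟨n1, hn1⟩ := (hH2 _).mp ((hH2mem _).mpr hsub)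
    refine ⟨(m1 : ZMod (p ^ k)), (n1 : ZMod (p ^ k)), hxs, ?_⟩
    show x.2 = (m1 : ZMod (p ^ k)) * (c : ZMod (p ^ k))
        + (n1 : ZMod (p ^ k)) * ((p ^ b : ℕ) : ZMod (p ^ k))
    have hxx : x.2 - (m1 : ZMod (p ^ k)) * (c : ZMod (p ^ k))
        = (n1 : ZMod (p ^ k)) * ((p ^ b : ℕ) : ZMod (p ^ k)) := by
      rw [zmod_self_decomp (x.2 - (m1 : ZMod (p ^ k)) * (c : ZMod (p ^ k))), hn1]
      push_cast
      ring
    linear_combination hxx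


theorem cardA (hp : p.Prime) :
    Nat.card {S : AddSubgroup (ZMod (p ^ k) × ZMod (p ^ k)) //
        ∀ x ∈ S, ∀ y ∈ S, x * y ∈ S}
      = ∑ b ∈ range (k + 1), ∑ a ∈ range (k + 1), f p k a b := by
  classical
  haveI : NeZero (p ^ k) := ⟨pow_ne_zero k hp.pos.ne'⟩
  set D : Finset ((_ : ℕ × ℕ) × ℕ) :=
    (range (k + 1) ×ˢ range (k + 1)).sigma
      (fun ba => (range (p ^ ba.1)).filter (cond p k ba.2 ba.1)) with hD
  have hmemD : ∀ x : (_ : ℕ × ℕ) × ℕ, x ∈ D ↔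
      (x.1.1 ≤ k ∧ x.1.2 ≤ k ∧ x.2 < p ^ x.1.1 ∧ cond p k x.1.2 x.1.1 x.2) := by
    intro x
    rw [hD, Finset.mem_sigma, Finset.mem_product, Finset.mem_filter]
    simp only [mem_range]
    constructor
    · rintro ⟨⟨h1, h2⟩, h3, h4⟩
      exact ⟨by omega, by omega, h3, h4⟩
    · rintro ⟨h1, h2, h3, h4⟩
      exact ⟨⟨by omega, by omega⟩, h3, h4⟩
  set F : {x : (_ : ℕ × ℕ) × ℕ // x ∈ D} →
      {S : AddSubgroup (ZMod (p ^ k) × ZMod (p ^ k)) // ∀ x ∈ S, ∀ y ∈ S, x * y ∈ S} :=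
    fun x => ⟨sg (p ^ k) (p ^ (x.1.1.2)) (p ^ (x.1.1.1)) x.1.2,
      fun u hu v hv => sg_mul_closed ((hmemD x.1).mp x.2).2.2.2.2 hu hv⟩ with hF
  have hbij : Function.Bijective F := by
    constructor
    · rintro ⟨⟨⟨b, a⟩, c⟩, hx⟩ ⟨⟨⟨b', a'⟩, c'⟩, hy⟩ h
      have hgx := (hmemD _).mp hx
      have hgy := (hmemD _).mp hy
      simp only at hgx hgy
      have hsg : sg (p ^ k) (p ^ a) (p ^ b) c = sg (p ^ k) (p ^ a') (p ^ b') c' := by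
        have := congrArg Subtype.val h
        simpa [hF] using this
      obtain ⟨haa, hbb, hcc⟩ := sg_inj hp hgx.2.1 hgx.1 hgx.2.2.1 hgx.2.2.2.1
        hgy.2.1 hgy.1 hgy.2.2.1 hgy.2.2.2.1 hsg
      apply Subtype.ext
      simp only
      subst haa
      subst hbb
      subst hcc
      rfl
    · rintro ⟨S, hS⟩
      obtain ⟨a, b, c, hak, hbk, hc, hcond, hsg⟩ := sg_surj hp S hS
      refine ⟨⟨⟨(b, a), c⟩, ?_⟩, ?_⟩
      · exact (hmemD _).mpr ⟨hbk, hak, hc, hcond⟩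
      · apply Subtype.ext
        simpa [hF] using hsg
  rw [← Nat.card_eq_of_bijective F hbij, Nat.card_eq_finsetCard, hD,
    Finset.card_sigma, Finset.sum_product]
  rfl

end SG


lemma cond_zero_c (p k a b : ℕ) : cond p k a b 0 := by
  constructor <;> simp

lemma f_b_zero (p k a : ℕ) : f p k a 0 = 1 := by
  unfold f
  rw [pow_zero]
  have : (range 1).filter (cond p k a 0) = range 1 := by
    apply filter_true_of_mem
    intro c _
    exact ⟨by simpa using one_dvd _, by simpa using one_dvd _⟩
  rw [this, card_range]

lemma f_a_top (p k b : ℕ) (hp : 0 < p) : f p k k b = 1 := by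
  unfold f
  have h : (range (p ^ b)).filter (cond p k k b) = {0} := by
    ext c
    simp only [mem_filter, mem_range, mem_singleton]
    constructor
    · rintro ⟨hc, h1, -⟩
      simp only [Nat.sub_self, pow_zero, mul_one] at h1
      exact Nat.eq_zero_of_dvd_of_lt h1 hc
    · rintro rfl
      exact ⟨pow_pos hp b, cond_zero_c p k k b⟩
  rw [h, card_singleton]

lemma f_a_zero {p : ℕ} (hp : p.Prime) (k b : ℕ) (hb : 1 ≤ b) (hbk : b ≤ k) :
    f p k 0 b = 2 := by
  unfold f
  have hppos := hp.pos
  have hpi : Prime (p : ℤ) := Nat.prime_iff_prime_int.1 hp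
  have h2 : (range (p ^ b)).filter (cond p k 0 b) = {0, 1} := by
    ext c
    simp only [mem_filter, mem_range, mem_insert, mem_singleton]
    constructor
    · rintro ⟨hc, -, h2⟩
      simp only [pow_zero] at h2
      rcases Nat.eq_zero_or_pos c with rfl | hcpos
      · left; rfl
      right
      have hcb : (c : ℤ) < (p : ℤ) ^ b := by exact_mod_cast hc
      have hc1 : (1 : ℤ) ≤ (c : ℤ) := by exact_mod_cast hcpos
      by_cases hpc : (p : ℤ) ∣ (c : ℤ)
      · exfalso
        have hnd : ¬ (p : ℤ) ∣ ((c : ℤ) - 1) := by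
          intro h
          have h1 : (p : ℤ) ∣ 1 := by simpa using dvd_sub hpc h
          exact hpi.not_dvd_one h1
        have hcop : IsCoprime ((p : ℤ) ^ b) ((c : ℤ) - 1) :=
          IsCoprime.pow_left ((hpi.coprime_iff_not_dvd).mpr hnd)
        have hd : (p : ℤ) ^ b ∣ (c : ℤ) := hcop.dvd_of_dvd_mul_right h2
        have := Int.le_of_dvd (by omega) hd
        omega
      · have hcop : IsCoprime ((p : ℤ) ^ b) (c : ℤ) :=
          IsCoprime.pow_left ((hpi.coprime_iff_not_dvd).mpr hpc)
        have hd : (p : ℤ) ^ b ∣ ((c : ℤ) - 1) := hcop.dvd_of_dvd_mul_left h2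
        rcases eq_or_ne ((c : ℤ) - 1) 0 with h0 | hne
        · have : (c : ℤ) = 1 := by omega
          exact_mod_cast this
        · exfalso
          have hpos : (0 : ℤ) < (c : ℤ) - 1 := by omega
          have := Int.le_of_dvd hpos hd
          have hpble : (p : ℤ) ^ b ≤ (p:ℤ) ^ b := le_refl _
          omega
    · intro h
      rcases h with rfl | rfl
      · exact ⟨pow_pos hppos b, cond_zero_c p k 0 b⟩
      · refine ⟨?_, ?_, ?_⟩
        · exact Nat.one_lt_pow (by omega) hp.one_lt
        · simpa using pow_dvd_pow p hbk
        · simp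
  rw [h2, card_insert_of_notMem (by simp), card_singleton]

lemma f_b_one {p : ℕ} (hp : p.Prime) (k a : ℕ) (ha : 1 ≤ a) :
    f p k a 1 = 1 := by
  unfold f
  have hpi : Prime (p : ℤ) := Nat.prime_iff_prime_int.1 hp
  have h : (range (p ^ 1)).filter (cond p k a 1) = {0} := by
    ext c
    simp only [mem_filter, mem_range, mem_singleton, pow_one]
    constructor
    · rintro ⟨hc, -, h2⟩
      rw [pow_one] at h2
      have hpdvd : (p : ℤ) ∣ (c : ℤ) := by
        rcases hpi.dvd_mul.mp h2 with h | h
        · exact h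
        · have hpa : (p : ℤ) ∣ (p : ℤ) ^ a := dvd_pow_self _ (by omega : a ≠ 0)
          have := dvd_add h hpa
          simpa using this
      have : p ∣ c := by exact_mod_cast hpdvd
      exact Nat.eq_zero_of_dvd_of_lt this hc
    · rintro rfl
      exact ⟨hp.pos, cond_zero_c p k a 1⟩
  rw [h, card_singleton]

lemma cond_mod (p k a b : ℕ) (c : ℕ) :
    cond p k a b c ↔ cond p k a b (c % p ^ b) := by
  unfold cond
  have h1 : ∀ m : ℕ, (p ^ b ∣ m * p ^ (k - a)) ↔
      ((m : ZMod (p^b)) * ((p : ZMod (p^b)))^(k-a) = 0) := by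
    intro m
    rw [← ZMod.natCast_eq_zero_iff (m * p^(k-a)) (p^b)]
    push_cast
    rfl
  have h2 : ∀ m : ℕ, ((p:ℤ) ^ b ∣ (m:ℤ) * ((m:ℤ) - (p:ℤ)^a)) ↔
      ((m : ZMod (p^b)) * ((m : ZMod (p^b)) - ((p : ZMod (p^b)))^a) = 0) := by
    intro m
    rw [show ((p:ℤ)^b) = ((p^b : ℕ) : ℤ) by push_cast; ring,
        ← ZMod.intCast_zmod_eq_zero_iff_dvd]
    push_cast
    rfl
  rw [h1, h1, h2, h2, ZMod.natCast_mod]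


lemma filter_range_mul {Q : ℕ → Prop} [DecidablePred Q] (n m : ℕ)
    (h : ∀ d, Q d ↔ Q (d % n)) :
    ((range (m * n)).filter Q).card = m * ((range n).filter Q).card := by
  induction m with
  | zero => simp
  | succ m ih =>
      have hdisj : Disjoint (range (m * n)) ((range n).map (addLeftEmbedding (m * n))) := by
        rw [Finset.disjoint_left]
        intro x hx hx'
        rw [mem_range] at hx
        rw [mem_map] at hx'
        obtain ⟨r, -, hr⟩ := hx'
        simp only [addLeftEmbedding_apply] at hr
        omega
      rw [Nat.succ_mul, Finset.range_add, filter_union, card_union_of_disjoint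
        (Finset.disjoint_filter_filter hdisj), ih, Finset.filter_map, card_map]
      have : (range n).filter (Q ∘ (addLeftEmbedding (m * n))) = (range n).filter Q := by
        apply filter_congr
        intro r _
        simp only [Function.comp_apply, addLeftEmbedding_apply]
        rw [mem_range] at *
        rw [h (m * n + r)]
        have he : (m * n + r) % n = r := by
          rw [add_comm, Nat.add_mul_mod_self_right]
          exact Nat.mod_eq_of_lt ‹r < n›
        rw [he]
      rw [this]
      ring

lemma cond_shift {p : ℕ} (hp : p.Prime) {k a b : ℕ} (ha : a ≤ k) (d : ℕ) :
    cond p (k + 2) (a + 1) (b + 2) (p * d) ↔ cond p k a b d := by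
  unfold cond
  have hke : k + 2 - (a + 1) = (k - a) + 1 := by omega
  have hp2 : (p : ℕ) ^ 2 ≠ 0 := pow_ne_zero 2 hp.pos.ne'
  have hp2i : ((p : ℤ)) ^ 2 ≠ 0 := pow_ne_zero 2 (by exact_mod_cast hp.pos.ne')
  constructor
  · rintro ⟨h1, h2⟩
    constructor
    · rw [hke] at h1
      have : p ^ 2 * p ^ b ∣ p ^ 2 * (d * p ^ (k - a)) := by
        calc p ^ 2 * p ^ b = p ^ (b + 2) := by ring
        _ ∣ p * d * p ^ (k - a + 1) := h1
        _ = p ^ 2 * (d * p ^ (k - a)) := by ring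
      exact (mul_dvd_mul_iff_left hp2).mp this
    · have : (p:ℤ) ^ 2 * (p:ℤ) ^ b ∣ (p:ℤ) ^ 2 * ((d:ℤ) * ((d:ℤ) - (p:ℤ) ^ a)) := by
        calc (p:ℤ) ^ 2 * (p:ℤ) ^ b = (p:ℤ) ^ (b + 2) := by ring
        _ ∣ (↑(p * d) : ℤ) * ((↑(p * d) : ℤ) - (p:ℤ) ^ (a + 1)) := h2
        _ = (p:ℤ) ^ 2 * ((d:ℤ) * ((d:ℤ) - (p:ℤ) ^ a)) := by push_cast; ring
      exact (mul_dvd_mul_iff_left hp2i).mp this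
  · rintro ⟨h1, h2⟩
    constructor
    · rw [hke]
      calc p ^ (b + 2) = p ^ 2 * p ^ b := by ring
      _ ∣ p ^ 2 * (d * p ^ (k - a)) := mul_dvd_mul_left _ h1
      _ = p * d * p ^ (k - a + 1) := by ring
    · calc (p:ℤ) ^ (b + 2) = (p:ℤ) ^ 2 * (p:ℤ) ^ b := by ring
      _ ∣ (p:ℤ) ^ 2 * ((d:ℤ) * ((d:ℤ) - (p:ℤ) ^ a)) := mul_dvd_mul_left _ h2
      _ = (↑(p * d) : ℤ) * ((↑(p * d) : ℤ) - (p:ℤ) ^ (a + 1)) := by push_cast; ring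

lemma cond_shift_dvd {p : ℕ} (hp : p.Prime) {k a b c : ℕ}
    (h : cond p (k + 2) (a + 1) (b + 2) c) : p ∣ c := by
  have hpi : Prime (p : ℤ) := Nat.prime_iff_prime_int.1 hp
  have h2 := h.2
  have hpd : (p : ℤ) ∣ (c : ℤ) * ((c : ℤ) - (p : ℤ) ^ (a + 1)) :=
    dvd_trans (dvd_pow_self _ (by omega : b + 2 ≠ 0)) h2
  have : (p : ℤ) ∣ (c : ℤ) := by
    rcases hpi.dvd_mul.mp hpd with h | h
    · exact h
    · have hpa : (p : ℤ) ∣ (p : ℤ) ^ (a + 1) := dvd_pow_self _ (by omega)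
      have := dvd_add h hpa
      simpa using this
  exact_mod_cast this

lemma f_shift {p : ℕ} (hp : p.Prime) {k a : ℕ} (b : ℕ) (ha : a ≤ k) :
    f p (k + 2) (a + 1) (b + 2) = p * f p k a b := by
  unfold f
  have step1 : ((range (p ^ (b + 2))).filter (cond p (k + 2) (a + 1) (b + 2))).card
      = ((range (p ^ (b + 1))).filter (cond p k a b)).card := by
    apply Finset.card_bij' (i := fun c _ => c / p) (j := fun d _ => p * d)
    · intro c hc
      simp only [mem_filter, mem_range] at hc ⊢
      obtain ⟨hcr, hcond⟩ := hc
      have hdvd : p ∣ c := cond_shift_dvd hp hcond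
      obtain ⟨d, rfl⟩ := hdvd
      rw [Nat.mul_div_cancel_left _ hp.pos]
      refine ⟨?_, (cond_shift hp ha d).mp hcond⟩
      have : p * d < p * p ^ (b + 1) := by
        calc p * d < p ^ (b + 2) := hcr
        _ = p * p ^ (b + 1) := by ring
      exact lt_of_mul_lt_mul_left this (Nat.zero_le p)
    · intro d hd
      simp only [mem_filter, mem_range] at hd ⊢
      obtain ⟨hdr, hcond⟩ := hd
      refine ⟨?_, (cond_shift hp ha d).mpr hcond⟩
      calc p * d < p * p ^ (b + 1) := by
            exact (Nat.mul_lt_mul_left hp.pos).mpr hdr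
      _ = p ^ (b + 2) := by ring
    · intro c hc
      simp only [mem_filter, mem_range] at hc
      obtain ⟨d, rfl⟩ := cond_shift_dvd hp hc.2
      rw [Nat.mul_div_cancel_left _ hp.pos]
    · intro d hd
      rw [Nat.mul_div_cancel_left _ hp.pos]
  rw [step1]
  have : p ^ (b + 1) = p * p ^ b := by ring
  rw [this, filter_range_mul _ _ (cond_mod p k a b)]

lemma N_rec {p : ℕ} (hp : p.Prime) (k : ℕ) :
    ∑ b ∈ range (k + 2 + 1), ∑ a ∈ range (k + 2 + 1), f p (k + 2) a b
      = p * (∑ b ∈ range (k + 1), ∑ a ∈ range (k + 1), f p k a b) + (5 * k + 10) := by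
  rw [Finset.sum_range_succ' _ (k + 2), Finset.sum_range_succ' _ (k + 1)]
  -- now: ∑_{b < k+1} g (b+2) + g 1 + g 0
  have g0 : ∑ a ∈ range (k + 2 + 1), f p (k + 2) a 0 = k + 3 := by
    rw [Finset.sum_congr rfl (fun a _ => f_b_zero p (k + 2) a)]
    simp
  have g1 : ∑ a ∈ range (k + 2 + 1), f p (k + 2) a 1 = k + 4 := by
    rw [Finset.sum_range_succ' _ (k + 2)]
    rw [Finset.sum_congr rfl (fun a _ => f_b_one hp (k + 2) (a + 1) (by omega))]
    rw [f_a_zero hp (k + 2) 1 le_rfl (by omega)]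
    simp
  have g2 : ∀ b ∈ range (k + 1), ∑ a ∈ range (k + 2 + 1), f p (k + 2) a (b + 2)
      = p * (∑ a ∈ range (k + 1), f p k a b) + 3 := by
    intro b hb
    rw [mem_range] at hb
    rw [Finset.sum_range_succ _ (k + 2), Finset.sum_range_succ' _ (k + 1)]
    rw [Finset.sum_congr rfl (fun a ha => f_shift hp (b := b) (by rw [mem_range] at ha; omega))]
    rw [f_a_zero hp (k + 2) (b + 2) (by omega) (by omega), f_a_top p (k + 2) (b + 2) hp.pos]
    rw [← Finset.mul_sum]
  rw [Finset.sum_congr rfl g2, g0, g1, Finset.sum_add_distrib, ← Finset.mul_sum]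
  simp only [Finset.sum_const, card_range, smul_eq_mul]
  ring

lemma N_base {p : ℕ} (hp : p.Prime) :
    ∑ b ∈ range 2, ∑ a ∈ range 2, f p 1 a b = 5 := by
  have h00 := f_b_zero p 1 0
  have h10 := f_b_zero p 1 1
  have h01 := f_a_zero hp 1 1 le_rfl le_rfl
  have h11 := f_b_one hp 1 1 le_rfl
  simp [Finset.sum_range_succ, h00, h10, h01, h11]

theorem partB {p : ℕ} (hp : p.Prime) (γ : ℕ) (hγ : 1 ≤ γ) :
    ∑ b ∈ range (2 * γ - 1 + 1), ∑ a ∈ range (2 * γ - 1 + 1), f p (2 * γ - 1) a b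
      = 5 * ∑ j ∈ Finset.Icc 1 γ, (2 * j - 1) * p ^ (γ - j) := by
  induction γ, hγ using Nat.le_induction with
  | base =>
      simpa using N_base hp
  | succ γ hγ ih =>
      have hk : 2 * (γ + 1) - 1 = (2 * γ - 1) + 2 := by omega
      rw [hk]
      rw [N_rec hp (2 * γ - 1), ih]
      rw [Finset.sum_Icc_succ_top (by omega : 1 ≤ γ + 1)]
      have hstep : ∑ j ∈ Finset.Icc 1 γ, (2 * j - 1) * p ^ (γ + 1 - j)
          = p * ∑ j ∈ Finset.Icc 1 γ, (2 * j - 1) * p ^ (γ - j) := by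
        rw [Finset.mul_sum]
        apply Finset.sum_congr rfl
        intro j hj
        rw [Finset.mem_Icc] at hj
        have : γ + 1 - j = (γ - j) + 1 := by omega
        rw [this]
        ring
      rw [mul_add, hstep]
      have h1 : (2 * (γ + 1) - 1) = 2 * γ + 1 := by omega
      have h2 : γ + 1 - (γ + 1) = 0 := by omega
      rw [h1, h2, pow_zero, mul_one]
      have hk2 : 5 * (2 * γ - 1) + 10 = 5 * (2 * γ + 1) := by omega
      rw [hk2]
      ring

end CountSubrings

theorem count_subrings_odd_prime_power (p : ℕ) (hp : p.Prime) (γ : ℕ) (hγ : 1 ≤ γ) :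
    Nat.card {S : AddSubgroup (ZMod (p ^ (2 * γ - 1)) × ZMod (p ^ (2 * γ - 1))) //
        ∀ x ∈ S, ∀ y ∈ S, x * y ∈ S}
      = 5 * ∑ j ∈ Finset.Icc 1 γ, (2 * j - 1) * p ^ (γ - j) := by
  rw [CountSubrings.cardA hp, CountSubrings.partB hp γ hγ]
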